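/- arXiv:1908.08101 — 4 statements merged into one kernel-verified Lean document; each statement's English description precedes it below -/
import Mathlib

section
/- Projection-based CUR perturbation bound (Theorem 4.1, first form): Under the stated assumptions, ‖A − C̃ C̃† Ã R̃† R̃‖_F ≤ ‖E_I‖_F · ‖A R†‖_F + ‖E_J‖_F · ‖C† A‖_F + 3‖E‖_F. -/
open Matrix

noncomputable section

variable {𝕂 : Type} [RCLike 𝕂]

/-- The Frobenius norm of a matrix. -/
noncomputable def frobNorm {m n : ℕ} (M : Matrix (Fin m) (Fin n) 𝕂) : ℝ :=
  Real.sqrt (∑ i, ∑ j, ‖M i j‖ ^ 2)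

/-- The `i`-th largest singular value of a matrix (1-indexed), i.e. the `i`-th largest
square root of an eigenvalue of `Mᴴ * M`. -/
noncomputable def sigma {m n : ℕ} (M : Matrix (Fin m) (Fin n) 𝕂) (i : ℕ) : ℝ :=
  ((List.ofFn fun j : Fin n =>
      Real.sqrt ((Matrix.isHermitian_conjTranspose_mul_self M).eigenvalues j)).insertionSort
      (· ≥ ·)).getD (i - 1) 0

/-- The spectral norm: the largest singular value. -/
noncomputable def specNorm {m n : ℕ} (M : Matrix (Fin m) (Fin n) 𝕂) : ℝ := sigma M 1

/-- `P` is the Moore–Penrose pseudoinverse of `M`: the four Penrose conditions. -/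
def IsMPInv {m n : ℕ} (M : Matrix (Fin m) (Fin n) 𝕂) (P : Matrix (Fin n) (Fin m) 𝕂) : Prop :=
  M * P * M = M ∧ P * M * P = P ∧ (M * P)ᴴ = M * P ∧ (P * M)ᴴ = P * M

/-- `Mr` is a truncated SVD of order `r` of `M`, i.e. a best rank-`r` approximation of `M`
(equivalently, a matrix obtained from an SVD of `M` by keeping the `r` largest singular
values and zeroing out the rest). -/
def IsTruncSVD {m n : ℕ} (M Mr : Matrix (Fin m) (Fin n) 𝕂) (r : ℕ) : Prop :=
  Mr.rank ≤ r ∧ ∀ B : Matrix (Fin m) (Fin n) 𝕂, B.rank ≤ r → frobNorm (M - Mr) ≤ frobNorm (M - B)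

/-- `Mt = [M]_τ`: the matrix obtained from an SVD of `M` by setting to zero every singular
value strictly less than `τ` (i.e. keeping exactly the singular values `≥ τ`). -/
def IsThresh {m n : ℕ} (M Mt : Matrix (Fin m) (Fin n) 𝕂) (τ : ℝ) : Prop :=
  IsTruncSVD M Mt (Nat.card {i : Fin (min m n) // τ ≤ sigma M ((i : ℕ) + 1)})

/-- The volume of a matrix: the product of its `min p q` largest singular values. -/
noncomputable def vol {p q : ℕ} (M : Matrix (Fin p) (Fin q) 𝕂) : ℝ :=
  ∏ i ∈ Finset.range (min p q), sigma M (i + 1)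

end

section Aux

attribute [local instance] Matrix.frobeniusSeminormedAddCommGroup

variable {𝕂 : Type} [RCLike 𝕂]

open scoped ComplexOrder

lemma frobNorm_eq {m n : ℕ} (M : Matrix (Fin m) (Fin n) 𝕂) : frobNorm M = ‖M‖ := by
  rw [frobNorm, Matrix.frobenius_norm_def, Real.sqrt_eq_rpow]
  congr 1
  refine Finset.sum_congr rfl fun i _ => Finset.sum_congr rfl fun j _ => ?_
  rw [← Real.rpow_natCast ‖M i j‖ 2]
  norm_num

lemma frob_sq_eq_trace {a b : ℕ} (M : Matrix (Fin a) (Fin b) 𝕂) :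
    ‖M‖ ^ 2 = RCLike.re (Mᴴ * M).trace := by
  have h : (0:ℝ) ≤ ∑ i, ∑ j, ‖M i j‖ ^ 2 := by positivity
  have h1 : ‖M‖ ^ 2 = ∑ i, ∑ j, ‖M i j‖ ^ 2 := by
    rw [← frobNorm_eq, frobNorm, Real.sq_sqrt h]
  rw [h1, Matrix.trace]
  simp only [Matrix.diag_apply, Matrix.mul_apply, Matrix.conjTranspose_apply, map_sum]
  rw [Finset.sum_comm]
  refine Finset.sum_congr rfl fun i _ => Finset.sum_congr rfl fun j _ => ?_
  rw [RCLike.star_def, RCLike.conj_mul]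
  rw [← RCLike.ofReal_pow, RCLike.ofReal_re]

/-- Frobenius-norm contraction for an orthogonal projection acting on the left. -/
lemma frob_proj_left {a b : ℕ} {P : Matrix (Fin a) (Fin a) 𝕂}
    (h1 : P * P = P) (h2 : Pᴴ = P) (X : Matrix (Fin a) (Fin b) 𝕂) :
    ‖P * X‖ ≤ ‖X‖ := by
  have hPPX : ∀ Y : Matrix (Fin a) (Fin b) 𝕂, P * (P * Y) = P * Y := fun Y => by
    rw [← Matrix.mul_assoc, h1]
  have key : (P * X)ᴴ * (P * X) + (X - P * X)ᴴ * (X - P * X) = Xᴴ * X := by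
    have hYY : (P * X)ᴴ * (P * X) = Xᴴ * (P * X) := by
      rw [Matrix.conjTranspose_mul, h2, Matrix.mul_assoc, hPPX]
    have hYX : (P * X)ᴴ * X = Xᴴ * (P * X) := by
      rw [Matrix.conjTranspose_mul, h2, Matrix.mul_assoc]
    have hXY : Xᴴ * (P * X) = Xᴴ * (P * X) := rfl
    rw [Matrix.conjTranspose_sub, Matrix.sub_mul, Matrix.mul_sub, Matrix.mul_sub, hYY, hYX]
    abel
  have ht : RCLike.re ((P * X)ᴴ * (P * X)).trace + RCLike.re ((X - P * X)ᴴ * (X - P * X)).trace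
      = RCLike.re (Xᴴ * X).trace := by
    rw [← map_add, ← Matrix.trace_add, key]
  rw [← frob_sq_eq_trace, ← frob_sq_eq_trace, ← frob_sq_eq_trace] at ht
  nlinarith [norm_nonneg (P * X), norm_nonneg X, sq_nonneg ‖X - P * X‖]

/-- Frobenius-norm contraction for an orthogonal projection acting on the right. -/
lemma frob_proj_right {a b : ℕ} {Q : Matrix (Fin b) (Fin b) 𝕂}
    (h1 : Q * Q = Q) (h2 : Qᴴ = Q) (X : Matrix (Fin a) (Fin b) 𝕂) :
    ‖X * Q‖ ≤ ‖X‖ := by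
  have := frob_proj_left h1 h2 Xᴴ
  rw [← Matrix.frobenius_norm_conjTranspose (X * Q), Matrix.conjTranspose_mul, h2]
  rw [← Matrix.frobenius_norm_conjTranspose X]
  exact this

/-- If `C` consists of columns of `A` and has the same rank, then `C C† A = A`. -/
lemma col_projection {m n q : ℕ} (A : Matrix (Fin m) (Fin n) 𝕂) (κ : Fin q ↪ Fin n)
    (hC : (A.submatrix id ⇑κ).rank = A.rank)
    (Cp : Matrix (Fin q) (Fin m) 𝕂)
    (hCp : (A.submatrix id ⇑κ) * Cp * (A.submatrix id ⇑κ) = A.submatrix id ⇑κ) :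
    (A.submatrix id ⇑κ) * Cp * A = A := by
  set C := A.submatrix id ⇑κ with hCdef
  have hle : LinearMap.range C.mulVecLin ≤ LinearMap.range A.mulVecLin := by
    rintro x ⟨v, rfl⟩
    refine ⟨fun j' => ∑ j, if κ j = j' then v j else 0, ?_⟩
    ext i
    simp only [Matrix.mulVecLin_apply, Matrix.mulVec, dotProduct, hCdef,
      Matrix.submatrix_apply, id_eq, Finset.mul_sum]
    rw [Finset.sum_comm]
    refine Finset.sum_congr rfl fun j _ => ?_
    rw [Finset.sum_eq_single (κ j)]
    · simp
    · intro b _ hb; simp [Ne.symm hb]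
    · simp
  have heq : LinearMap.range C.mulVecLin = LinearMap.range A.mulVecLin :=
    Submodule.eq_of_le_of_finrank_le hle (le_of_eq hC.symm)
  have hcols : ∀ v, (C * Cp * A).mulVec v = A.mulVec v := by
    intro v
    have hmem : A.mulVec v ∈ LinearMap.range C.mulVecLin := by
      rw [heq]; exact ⟨v, rfl⟩
    obtain ⟨w, hw⟩ := hmem
    simp only [Matrix.mulVecLin_apply] at hw
    calc (C * Cp * A).mulVec v = (C * Cp).mulVec (A.mulVec v) := by
          rw [Matrix.mulVec_mulVec]
      _ = (C * Cp).mulVec (C.mulVec w) := by rw [hw]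
      _ = (C * Cp * C).mulVec w := by rw [Matrix.mulVec_mulVec]
      _ = C.mulVec w := by rw [hCp]
      _ = A.mulVec v := hw
  ext i j
  have := congrFun (hcols (Pi.single j 1)) i
  simpa [Matrix.mulVec_single] using this

/-- If `R` consists of rows of `A` and has the same rank, then `A R† R = A`. -/
lemma row_projection {m n p : ℕ} (A : Matrix (Fin m) (Fin n) 𝕂) (ι : Fin p ↪ Fin m)
    (hR : (A.submatrix ⇑ι id).rank = A.rank)
    (Rp : Matrix (Fin n) (Fin p) 𝕂)
    (hRp : (A.submatrix ⇑ι id) * Rp * (A.submatrix ⇑ι id) = A.submatrix ⇑ι id) :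
    A * Rp * (A.submatrix ⇑ι id) = A := by
  set R := A.submatrix ⇑ι id with hRdef
  have hsub : Aᴴ.submatrix id ⇑ι = Rᴴ := by
    rw [hRdef, Matrix.conjTranspose_submatrix]
  have hrank : (Aᴴ.submatrix id ⇑ι).rank = Aᴴ.rank := by
    rw [hsub, Matrix.rank_conjTranspose, Matrix.rank_conjTranspose, hR]
  have hMP : (Aᴴ.submatrix id ⇑ι) * Rpᴴ * (Aᴴ.submatrix id ⇑ι) = Aᴴ.submatrix id ⇑ι := by
    rw [hsub]
    calc Rᴴ * Rpᴴ * Rᴴ = (R * Rp * R)ᴴ := by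
          rw [Matrix.conjTranspose_mul, Matrix.conjTranspose_mul, Matrix.mul_assoc]
      _ = Rᴴ := by rw [hRp]
  have h := col_projection Aᴴ ι hrank Rpᴴ hMP
  rw [hsub] at h
  have h2 := congrArg Matrix.conjTranspose h
  simpa [Matrix.conjTranspose_mul, Matrix.mul_assoc] using h2

end Aux

section Main

attribute [local instance] Matrix.frobeniusSeminormedAddCommGroup

set_option maxHeartbeats 1000000 in
/-- Theorem 4.1 (first form): projection-based CUR perturbation bound. -/
theorem projection_cur_perturbation {𝕂 : Type} [RCLike 𝕂] {m n k p q : ℕ}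
    (A E : Matrix (Fin m) (Fin n) 𝕂)
    (hrankA : A.rank = k)
    (ι : Fin p ↪ Fin m) (κ : Fin q ↪ Fin n)
    (hrankC : (A.submatrix id ⇑κ).rank = k)
    (hrankU : (A.submatrix ⇑ι ⇑κ).rank = k)
    (hrankR : (A.submatrix ⇑ι id).rank = k)
    (Cp : Matrix (Fin q) (Fin m) 𝕂) (hCp : IsMPInv (A.submatrix id ⇑κ) Cp)
    (Rp : Matrix (Fin n) (Fin p) 𝕂) (hRp : IsMPInv (A.submatrix ⇑ι id) Rp)
    (Ctp : Matrix (Fin q) (Fin m) 𝕂) (hCtp : IsMPInv ((A + E).submatrix id ⇑κ) Ctp)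
    (Rtp : Matrix (Fin n) (Fin p) 𝕂) (hRtp : IsMPInv ((A + E).submatrix ⇑ι id) Rtp) :
    frobNorm (A - (A + E).submatrix id ⇑κ * Ctp * (A + E) * Rtp * (A + E).submatrix ⇑ι id) ≤
      frobNorm (E.submatrix ⇑ι id) * frobNorm (A * Rp) +
        frobNorm (E.submatrix id ⇑κ) * frobNorm (Cp * A) + 3 * frobNorm E := by
  classical
  set C : Matrix (Fin m) (Fin q) 𝕂 := A.submatrix id ⇑κ with hCdef
  set R : Matrix (Fin p) (Fin n) 𝕂 := A.submatrix ⇑ι id with hRdef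
  set Ct : Matrix (Fin m) (Fin q) 𝕂 := (A + E).submatrix id ⇑κ with hCtdef
  set Rt : Matrix (Fin p) (Fin n) 𝕂 := (A + E).submatrix ⇑ι id with hRtdef
  set EJ : Matrix (Fin m) (Fin q) 𝕂 := E.submatrix id ⇑κ with hEJdef
  set EI : Matrix (Fin p) (Fin n) 𝕂 := E.submatrix ⇑ι id with hEIdef
  have hCt : Ct = C + EJ := by
    rw [hCtdef, hCdef, hEJdef, Matrix.submatrix_add]; rfl
  have hRt : Rt = R + EI := by
    rw [hRtdef, hRdef, hEIdef, Matrix.submatrix_add]; rfl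
  obtain ⟨hc1, hc2, hc3, hc4⟩ := hCtp
  obtain ⟨hr1, hr2, hr3, hr4⟩ := hRtp
  have hPP : (Ct * Ctp) * (Ct * Ctp) = Ct * Ctp := by
    rw [← Matrix.mul_assoc, hc1]
  have hPH : (Ct * Ctp)ᴴ = Ct * Ctp := hc3
  have hQQ : (Rtp * Rt) * (Rtp * Rt) = Rtp * Rt := by
    rw [Matrix.mul_assoc Rtp Rt, ← Matrix.mul_assoc Rt Rtp Rt, hr1]
  have hQH : (Rtp * Rt)ᴴ = Rtp * Rt := hr4
  have hPCt : (Ct * Ctp) * Ct = Ct := hc1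
  have hRtQ : Rt * (Rtp * Rt) = Rt := by rw [← Matrix.mul_assoc, hr1]
  set P : Matrix (Fin m) (Fin m) 𝕂 := Ct * Ctp with hPdef
  set Q : Matrix (Fin n) (Fin n) 𝕂 := Rtp * Rt with hQdef
  have hIP : (1 - P) * (1 - P) = 1 - P := by
    rw [Matrix.sub_mul, Matrix.mul_sub, Matrix.mul_sub, Matrix.one_mul, Matrix.one_mul,
      Matrix.mul_one, hPP]
    abel
  have hIPH : (1 - P)ᴴ = 1 - P := by
    rw [Matrix.conjTranspose_sub, Matrix.conjTranspose_one, hPH]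
  have hIQ : (1 - Q) * (1 - Q) = 1 - Q := by
    rw [Matrix.sub_mul, Matrix.mul_sub, Matrix.mul_sub, Matrix.one_mul, Matrix.one_mul,
      Matrix.mul_one, hQQ]
    abel
  have hIQH : (1 - Q)ᴴ = 1 - Q := by
    rw [Matrix.conjTranspose_sub, Matrix.conjTranspose_one, hQH]
  -- exact CUR reproduction of A
  have hCA : C * Cp * A = A :=
    col_projection A κ (by rw [← hCdef, hrankC, hrankA]) Cp hCp.1
  have hRA : A * Rp * R = A :=
    row_projection A ι (by rw [← hRdef, hrankR, hrankA]) Rp hRp.1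
  -- the three terms
  have hT1 : A - P * A = -((1 - P) * (EJ * (Cp * A))) := by
    have hPC : (1 - P) * C = -((1 - P) * EJ) := by
      have : (1 - P) * Ct = 0 := by
        rw [Matrix.sub_mul, Matrix.one_mul, hPCt, sub_self]
      rw [hCt] at this
      rw [Matrix.mul_add] at this
      linear_combination (norm := abel) this
    calc A - P * A = (1 - P) * A := by rw [Matrix.sub_mul, Matrix.one_mul]
      _ = (1 - P) * (C * (Cp * A)) := by
          rw [← Matrix.mul_assoc C, hCA]
      _ = ((1 - P) * C) * (Cp * A) := by rw [Matrix.mul_assoc]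
      _ = -((1 - P) * EJ) * (Cp * A) := by rw [hPC]
      _ = -((1 - P) * (EJ * (Cp * A))) := by
          rw [Matrix.neg_mul, Matrix.mul_assoc]
  have hT2 : A * (1 - Q) = -((A * Rp) * (EI * (1 - Q))) := by
    have hRQ : R * (1 - Q) = -(EI * (1 - Q)) := by
      have : Rt * (1 - Q) = 0 := by
        rw [Matrix.mul_sub, Matrix.mul_one, hRtQ, sub_self]
      rw [hRt] at this
      rw [Matrix.add_mul] at this
      linear_combination (norm := abel) this
    calc A * (1 - Q) = (A * Rp) * (R * (1 - Q)) := by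
          rw [← Matrix.mul_assoc, hRA]
      _ = (A * Rp) * -(EI * (1 - Q)) := by rw [hRQ]
      _ = -((A * Rp) * (EI * (1 - Q))) := by rw [Matrix.mul_neg]
  -- decomposition
  have hdec : A - Ct * Ctp * (A + E) * Rtp * Rt =
      (A - P * A) + P * (A * (1 - Q)) + -(P * (E * Q)) := by
    rw [hPdef, hQdef]
    simp only [Matrix.mul_sub, Matrix.sub_mul, Matrix.mul_add, Matrix.add_mul,
      Matrix.mul_one, Matrix.one_mul, Matrix.mul_assoc]
    abel
  -- norm bounds
  have b1 : ‖A - P * A‖ ≤ ‖EJ‖ * ‖Cp * A‖ := by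
    rw [hT1, norm_neg]
    refine le_trans (frob_proj_left hIP hIPH _) ?_
    exact Matrix.frobenius_norm_mul _ _
  have b2 : ‖P * (A * (1 - Q))‖ ≤ ‖A * Rp‖ * ‖EI‖ := by
    refine le_trans (frob_proj_left hPP hPH _) ?_
    rw [hT2, norm_neg]
    refine le_trans (Matrix.frobenius_norm_mul _ _) ?_
    exact mul_le_mul_of_nonneg_left (frob_proj_right hIQ hIQH EI) (norm_nonneg _)
  have b3 : ‖-(P * (E * Q))‖ ≤ ‖E‖ := by
    rw [norm_neg]
    exact le_trans (frob_proj_left hPP hPH _) (frob_proj_right hQQ hQH E)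
  have htri : ‖(A - P * A) + P * (A * (1 - Q)) + -(P * (E * Q))‖ ≤
      ‖A - P * A‖ + ‖P * (A * (1 - Q))‖ + ‖-(P * (E * Q))‖ :=
    le_trans (norm_add_le _ _) (add_le_add_left (norm_add_le _ _) _)
  rw [frobNorm_eq, frobNorm_eq, frobNorm_eq, frobNorm_eq, frobNorm_eq, frobNorm_eq, hdec]
  have hE : ‖E‖ ≤ 3 * ‖E‖ := by nlinarith [norm_nonneg E]
  calc ‖(A - P * A) + P * (A * (1 - Q)) + -(P * (E * Q))‖
      ≤ ‖A - P * A‖ + ‖P * (A * (1 - Q))‖ + ‖-(P * (E * Q))‖ := htri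
    _ ≤ ‖EJ‖ * ‖Cp * A‖ + ‖A * Rp‖ * ‖EI‖ + ‖E‖ :=
        add_le_add (add_le_add b1 b2) b3
    _ ≤ ‖EI‖ * ‖A * Rp‖ + ‖EJ‖ * ‖Cp * A‖ + 3 * ‖E‖ := by
        rw [mul_comm ‖A * Rp‖]
        linarith

end Main
end

section
/- Projection-based CUR perturbation bound (Theorem 4.1, second form): Under the stated assumptions, ‖A − C̃ C̃† Ã R̃† R̃‖_F ≤ ‖E‖_F · (‖W_{k,I}†‖_F + ‖V_{k,J}†‖_F + 3). -/
open Matrix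

open Matrix
variable {𝕂 : Type} [RCLike 𝕂] {m n k p q : ℕ}

noncomputable def fsq (M : Matrix (Fin m) (Fin n) 𝕂) : ℝ := ∑ i, ∑ j, ‖M i j‖ ^ 2

lemma fsq_nonneg (M : Matrix (Fin m) (Fin n) 𝕂) : 0 ≤ fsq M := by
  unfold fsq; positivity

lemma fsq_eq_retrace (M : Matrix (Fin m) (Fin n) 𝕂) :
    fsq M = RCLike.re ((Mᴴ * M).trace) := by
  unfold fsq
  rw [Matrix.trace, map_sum, Finset.sum_comm]
  refine Finset.sum_congr rfl fun j _ => ?_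
  rw [Matrix.diag_apply, Matrix.mul_apply, map_sum]
  refine Finset.sum_congr rfl fun i _ => ?_
  rw [Matrix.conjTranspose_apply, show star (M i j) = (starRingEnd 𝕂) (M i j) from rfl,
    RCLike.conj_mul]
  norm_cast

lemma fsq_proj_add (P : Matrix (Fin m) (Fin m) 𝕂) (X : Matrix (Fin m) (Fin n) 𝕂)
    (h1 : Pᴴ = P) (h2 : P * P = P) :
    fsq (P * X) + fsq ((1 - P) * X) = fsq X := by
  rw [fsq_eq_retrace, fsq_eq_retrace, fsq_eq_retrace, ← map_add, ← Matrix.trace_add]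
  congr 2
  have hself : (1 - P) * (1 - P) = 1 - P := by
    simp only [Matrix.sub_mul, Matrix.mul_sub, Matrix.mul_one, Matrix.one_mul, h2]
    abel
  have e1 : (P * X)ᴴ * (P * X) = Xᴴ * P * X := by
    rw [Matrix.conjTranspose_mul, h1]
    calc Xᴴ * P * (P * X) = Xᴴ * (P * P) * X := by
          rw [Matrix.mul_assoc, Matrix.mul_assoc, Matrix.mul_assoc]
      _ = Xᴴ * P * X := by rw [h2, Matrix.mul_assoc]
  have e2 : ((1 - P) * X)ᴴ * ((1 - P) * X) = Xᴴ * X - Xᴴ * P * X := by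
    rw [Matrix.conjTranspose_mul, Matrix.conjTranspose_sub, Matrix.conjTranspose_one, h1]
    rw [Matrix.mul_assoc Xᴴ (1 - P) ((1 - P) * X), ← Matrix.mul_assoc (1 - P) (1 - P) X,
      hself, Matrix.sub_mul, Matrix.one_mul, Matrix.mul_sub, ← Matrix.mul_assoc]
  rw [e1, e2]
  abel

lemma frobNorm_eq_sqrt_fsq (M : Matrix (Fin m) (Fin n) 𝕂) :
    frobNorm M = Real.sqrt (fsq M) := rfl

lemma frobNorm_nonneg (M : Matrix (Fin m) (Fin n) 𝕂) : 0 ≤ frobNorm M :=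
  Real.sqrt_nonneg _

lemma frobNorm_proj_left (P : Matrix (Fin m) (Fin m) 𝕂) (X : Matrix (Fin m) (Fin n) 𝕂)
    (h1 : Pᴴ = P) (h2 : P * P = P) : frobNorm (P * X) ≤ frobNorm X := by
  rw [frobNorm_eq_sqrt_fsq, frobNorm_eq_sqrt_fsq]
  apply Real.sqrt_le_sqrt
  have := fsq_proj_add P X h1 h2
  have := fsq_nonneg ((1 - P) * X)
  linarith

lemma fsq_conjTranspose (M : Matrix (Fin m) (Fin n) 𝕂) : fsq Mᴴ = fsq M := by
  unfold fsq
  rw [Finset.sum_comm]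
  simp [Matrix.conjTranspose_apply]

lemma frobNorm_conjTranspose (M : Matrix (Fin m) (Fin n) 𝕂) : frobNorm Mᴴ = frobNorm M := by
  rw [frobNorm_eq_sqrt_fsq, frobNorm_eq_sqrt_fsq, fsq_conjTranspose]

lemma frobNorm_proj_right (P : Matrix (Fin n) (Fin n) 𝕂) (X : Matrix (Fin m) (Fin n) 𝕂)
    (h1 : Pᴴ = P) (h2 : P * P = P) : frobNorm (X * P) ≤ frobNorm X := by
  rw [← frobNorm_conjTranspose (X * P), Matrix.conjTranspose_mul, h1,
    ← frobNorm_conjTranspose X]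
  exact frobNorm_proj_left P Xᴴ h1 h2

lemma frobNorm_neg (M : Matrix (Fin m) (Fin n) 𝕂) : frobNorm (-M) = frobNorm M := by
  unfold frobNorm; simp

lemma fsq_unitary_left (W : Matrix (Fin m) (Fin k) 𝕂) (M : Matrix (Fin k) (Fin n) 𝕂)
    (hW : Wᴴ * W = 1) : fsq (W * M) = fsq M := by
  rw [fsq_eq_retrace, fsq_eq_retrace]
  congr 2
  rw [Matrix.conjTranspose_mul, Matrix.mul_assoc, ← Matrix.mul_assoc Wᴴ W M, hW,
    Matrix.one_mul]

lemma frobNorm_unitary_left (W : Matrix (Fin m) (Fin k) 𝕂) (M : Matrix (Fin k) (Fin n) 𝕂)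
    (hW : Wᴴ * W = 1) : frobNorm (W * M) = frobNorm M := by
  rw [frobNorm_eq_sqrt_fsq, frobNorm_eq_sqrt_fsq, fsq_unitary_left W M hW]

lemma fsq_mul_le {t : ℕ} (X : Matrix (Fin m) (Fin t) 𝕂) (Y : Matrix (Fin t) (Fin n) 𝕂) :
    fsq (X * Y) ≤ fsq X * fsq Y := by
  have key : ∀ (i : Fin m) (j : Fin n),
      ‖(X * Y) i j‖ ^ 2 ≤ (∑ l, ‖X i l‖ ^ 2) * (∑ l, ‖Y l j‖ ^ 2) := by
    intro i j
    calc ‖(X * Y) i j‖ ^ 2 ≤ (∑ l, ‖X i l‖ * ‖Y l j‖) ^ 2 := by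
          apply pow_le_pow_left₀ (norm_nonneg _)
          rw [Matrix.mul_apply]
          exact (norm_sum_le _ _).trans (by simp [norm_mul])
      _ ≤ (∑ l, ‖X i l‖ ^ 2) * (∑ l, ‖Y l j‖ ^ 2) :=
          Finset.sum_mul_sq_le_sq_mul_sq _ _ _
  calc fsq (X * Y) ≤ ∑ i, ∑ j, (∑ l, ‖X i l‖ ^ 2) * (∑ l, ‖Y l j‖ ^ 2) := by
        apply Finset.sum_le_sum; intro i _
        exact Finset.sum_le_sum fun j _ => key i j
    _ = fsq X * fsq Y := by
        simp_rw [← Finset.mul_sum, ← Finset.sum_mul]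
        unfold fsq
        rw [Finset.sum_comm (f := fun l j => ‖Y l j‖ ^ 2)]

lemma frobNorm_mul_le {t : ℕ} (X : Matrix (Fin m) (Fin t) 𝕂) (Y : Matrix (Fin t) (Fin n) 𝕂) :
    frobNorm (X * Y) ≤ frobNorm X * frobNorm Y := by
  rw [frobNorm_eq_sqrt_fsq, frobNorm_eq_sqrt_fsq, frobNorm_eq_sqrt_fsq,
    ← Real.sqrt_mul (fsq_nonneg X)]
  exact Real.sqrt_le_sqrt (fsq_mul_le X Y)

lemma frobNorm_add_le (X Y : Matrix (Fin m) (Fin n) 𝕂) :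
    frobNorm (X + Y) ≤ frobNorm X + frobNorm Y := by
  have e : ∀ M : Matrix (Fin m) (Fin n) 𝕂,
      frobNorm M = ‖(WithLp.equiv 2 (Fin m × Fin n → 𝕂)).symm (fun p => M p.1 p.2)‖ := by
    intro M
    rw [EuclideanSpace.norm_eq]
    unfold frobNorm
    rw [← Finset.univ_product_univ, Finset.sum_product]
    rfl
  rw [e, e, e]
  have : ((WithLp.equiv 2 (Fin m × Fin n → 𝕂)).symm fun p => (X + Y) p.1 p.2)
      = (WithLp.equiv 2 (Fin m × Fin n → 𝕂)).symm (fun p => X p.1 p.2)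
        + (WithLp.equiv 2 (Fin m × Fin n → 𝕂)).symm (fun p => Y p.1 p.2) := rfl
  rw [this]
  exact norm_add_le _ _

lemma sum_comp_emb_le {a b : ℕ} (f : Fin b → ℝ) (hf : ∀ i, 0 ≤ f i) (e : Fin a ↪ Fin b) :
    ∑ i, f (e i) ≤ ∑ i, f i := by
  rw [← Finset.sum_image (g := ⇑e) (f := f) (fun x _ y _ h => e.injective h)]
  exact Finset.sum_le_sum_of_subset_of_nonneg (Finset.subset_univ _) fun i _ _ => hf i

lemma frobNorm_col_submatrix_le (E : Matrix (Fin m) (Fin n) 𝕂) (κ : Fin q ↪ Fin n) :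
    frobNorm (E.submatrix id ⇑κ) ≤ frobNorm E := by
  rw [frobNorm_eq_sqrt_fsq, frobNorm_eq_sqrt_fsq]
  apply Real.sqrt_le_sqrt
  unfold fsq
  apply Finset.sum_le_sum
  intro i _
  exact sum_comp_emb_le (fun j => ‖E i j‖ ^ 2) (fun j => by positivity) κ

lemma frobNorm_row_submatrix_le (E : Matrix (Fin m) (Fin n) 𝕂) (ι : Fin p ↪ Fin m) :
    frobNorm (E.submatrix ⇑ι id) ≤ frobNorm E := by
  rw [frobNorm_eq_sqrt_fsq, frobNorm_eq_sqrt_fsq]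
  apply Real.sqrt_le_sqrt
  unfold fsq
  exact sum_comp_emb_le (fun i => ∑ j, ‖E i j‖ ^ 2) (fun i => by positivity) ι

lemma isUnit_of_rank_eq {M : Matrix (Fin k) (Fin k) 𝕂} (h : M.rank = k) : IsUnit M := by
  rw [← Matrix.mulVec_surjective_iff_isUnit]
  have htop : LinearMap.range M.mulVecLin = ⊤ := by
    apply Submodule.eq_top_of_finrank_eq
    rw [show Module.finrank 𝕂 ↥(LinearMap.range M.mulVecLin) = M.rank from rfl, h,
      Module.finrank_pi, Fintype.card_fin]
  exact LinearMap.range_eq_top.mp htop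

lemma mpinv_left_inv {M : Matrix (Fin p) (Fin k) 𝕂} {P : Matrix (Fin k) (Fin p) 𝕂}
    (h : IsMPInv M P) (hr : M.rank = k) : P * M = 1 := by
  have hG : (Mᴴ * M).rank = k := by
    open scoped ComplexOrder in
    rw [Matrix.rank_conjTranspose_mul_self]; exact hr
  obtain ⟨u, hu⟩ := isUnit_of_rank_eq hG
  have hinv : (↑u⁻¹ : Matrix (Fin k) (Fin k) 𝕂) * (Mᴴ * M) = 1 := by
    rw [← hu]; exact u.inv_mul
  have key : (Mᴴ * M) * (P * M) = Mᴴ * M := by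
    rw [Matrix.mul_assoc Mᴴ M (P * M), ← Matrix.mul_assoc M P M, h.1]
  calc P * M = ((↑u⁻¹ : Matrix (Fin k) (Fin k) 𝕂) * (Mᴴ * M)) * (P * M) := by
        rw [hinv, Matrix.one_mul]
    _ = (↑u⁻¹ : Matrix (Fin k) (Fin k) 𝕂) * ((Mᴴ * M) * (P * M)) := by
        rw [Matrix.mul_assoc]
    _ = 1 := by rw [key, hinv]

lemma submatrix_id_mul {t : ℕ} (X : Matrix (Fin m) (Fin t) 𝕂) (Y : Matrix (Fin t) (Fin n) 𝕂)
    (κ : Fin q → Fin n) : (X * Y).submatrix id κ = X * Y.submatrix id κ := by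
  ext i j; simp [Matrix.mul_apply]

lemma mul_submatrix_id {t : ℕ} (X : Matrix (Fin m) (Fin t) 𝕂) (Y : Matrix (Fin t) (Fin n) 𝕂)
    (ι : Fin p → Fin m) : (X * Y).submatrix ι id = X.submatrix ι id * Y := by
  ext i j; simp [Matrix.mul_apply]

lemma rank_conjT (M : Matrix (Fin m) (Fin n) 𝕂) : Mᴴ.rank = M.rank := by
  open scoped ComplexOrder in exact Matrix.rank_conjTranspose M

set_option maxHeartbeats 2000000

/-- Theorem 4.1 (second form): projection-based CUR perturbation bound via singular vectors. -/
theorem projection_cur_perturbation_svd {𝕂 : Type} [RCLike 𝕂] {m n k p q : ℕ}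
    (A E : Matrix (Fin m) (Fin n) 𝕂)
    (hrankA : A.rank = k)
    (ι : Fin p ↪ Fin m) (κ : Fin q ↪ Fin n)
    (hrankC : (A.submatrix id ⇑κ).rank = k)
    (hrankU : (A.submatrix ⇑ι ⇑κ).rank = k)
    (hrankR : (A.submatrix ⇑ι id).rank = k)
    (W : Matrix (Fin m) (Fin k) 𝕂) (V : Matrix (Fin n) (Fin k) 𝕂) (d : Fin k → ℝ)
    (hW : Wᴴ * W = 1) (hV : Vᴴ * V = 1)
    (hmono : ∀ i j : Fin k, i ≤ j → d j ≤ d i) (hpos : ∀ i, 0 < d i)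
    (hSVD : A = W * Matrix.diagonal (fun i => (d i : 𝕂)) * Vᴴ)
    (Wp : Matrix (Fin k) (Fin p) 𝕂) (hWp : IsMPInv (W.submatrix ⇑ι id) Wp)
    (Vp : Matrix (Fin k) (Fin q) 𝕂) (hVp : IsMPInv (V.submatrix ⇑κ id) Vp)
    (Ctp : Matrix (Fin q) (Fin m) 𝕂) (hCtp : IsMPInv ((A + E).submatrix id ⇑κ) Ctp)
    (Rtp : Matrix (Fin n) (Fin p) 𝕂) (hRtp : IsMPInv ((A + E).submatrix ⇑ι id) Rtp) :
    frobNorm (A - (A + E).submatrix id ⇑κ * Ctp * (A + E) * Rtp * (A + E).submatrix ⇑ι id) ≤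
      frobNorm E * (frobNorm Wp + frobNorm Vp + 3) := by
  set D : Matrix (Fin k) (Fin k) 𝕂 := Matrix.diagonal (fun i => (d i : 𝕂)) with hD
  set C : Matrix (Fin m) (Fin q) 𝕂 := A.submatrix id ⇑κ with hC
  set R : Matrix (Fin p) (Fin n) 𝕂 := A.submatrix ⇑ι id with hR
  set Ct : Matrix (Fin m) (Fin q) 𝕂 := (A + E).submatrix id ⇑κ with hCt
  set Rt : Matrix (Fin p) (Fin n) 𝕂 := (A + E).submatrix ⇑ι id with hRt
  set EJ : Matrix (Fin m) (Fin q) 𝕂 := E.submatrix id ⇑κ with hEJ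
  set EI : Matrix (Fin p) (Fin n) 𝕂 := E.submatrix ⇑ι id with hEI
  set WI : Matrix (Fin p) (Fin k) 𝕂 := W.submatrix ⇑ι id with hWI
  set VJ : Matrix (Fin q) (Fin k) 𝕂 := V.submatrix ⇑κ id with hVJ
  obtain ⟨hC1, hC2, hC3, hC4⟩ := hCtp
  obtain ⟨hR1, hR2, hR3, hR4⟩ := hRtp
  -- structural identities
  have hCeq : C = W * D * VJᴴ := by
    rw [hC, hSVD, submatrix_id_mul, hVJ, Matrix.conjTranspose_submatrix]
  have hReq : R = WI * D * Vᴴ := by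
    rw [hR, hSVD, mul_submatrix_id, mul_submatrix_id, hWI]
  -- ranks
  have hrankVJ : VJ.rank = k := by
    refine le_antisymm (Matrix.rank_le_width VJ) ?_
    calc k = C.rank := hrankC.symm
      _ = ((W * D) * VJᴴ).rank := by rw [hCeq, Matrix.mul_assoc, ← Matrix.mul_assoc]
      _ ≤ VJᴴ.rank := Matrix.rank_mul_le_right (W * D) VJᴴ
      _ = VJ.rank := rank_conjT VJ
  have hrankWI : WI.rank = k := by
    refine le_antisymm (Matrix.rank_le_width WI) ?_
    calc k = R.rank := hrankR.symm
      _ = (WI * (D * Vᴴ)).rank := by rw [hReq, Matrix.mul_assoc]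
      _ ≤ WI.rank := Matrix.rank_mul_le_left WI (D * Vᴴ)
  have hVleft : Vp * VJ = 1 := mpinv_left_inv hVp hrankVJ
  have hWleft : Wp * WI = 1 := mpinv_left_inv hWp hrankWI
  -- exact reconstruction identities
  have hA1 : C * (Vpᴴ * Vᴴ) = A := by
    rw [hCeq, hSVD]
    simp only [Matrix.mul_assoc]
    rw [← Matrix.mul_assoc VJᴴ Vpᴴ Vᴴ, ← Matrix.conjTranspose_mul, hVleft,
      Matrix.conjTranspose_one, Matrix.one_mul]
  have hA2 : W * Wp * R = A := by
    rw [hReq, hSVD]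
    simp only [Matrix.mul_assoc]
    rw [← Matrix.mul_assoc Wp WI, hWleft, Matrix.one_mul]
  -- projections
  have hPP : (Ct * Ctp) * (Ct * Ctp) = Ct * Ctp := by
    rw [← Matrix.mul_assoc, hC1]
  have hQQ : (Rtp * Rt) * (Rtp * Rt) = Rtp * Rt := by
    rw [← Matrix.mul_assoc, hR2]
  have h1Ph : (1 - Ct * Ctp)ᴴ = 1 - Ct * Ctp := by
    rw [Matrix.conjTranspose_sub, Matrix.conjTranspose_one, hC3]
  have h1PP : (1 - Ct * Ctp) * (1 - Ct * Ctp) = 1 - Ct * Ctp := by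
    simp only [Matrix.sub_mul, Matrix.mul_sub, Matrix.mul_one, Matrix.one_mul, hPP]
    abel
  have h1Qh : (1 - Rtp * Rt)ᴴ = 1 - Rtp * Rt := by
    rw [Matrix.conjTranspose_sub, Matrix.conjTranspose_one, hR4]
  have h1QQ : (1 - Rtp * Rt) * (1 - Rtp * Rt) = 1 - Rtp * Rt := by
    simp only [Matrix.sub_mul, Matrix.mul_sub, Matrix.mul_one, Matrix.one_mul, hQQ]
    abel
  -- perturbation splits
  have hCsub : C = Ct - EJ := by
    rw [hC, hCt, hEJ]; ext i j
    simp [Matrix.submatrix_apply]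
  have hRsub : R = Rt - EI := by
    rw [hR, hRt, hEI]; ext i j
    simp [Matrix.submatrix_apply]
  -- annihilation
  have hzeroC : (1 - Ct * Ctp) * Ct = 0 := by
    rw [Matrix.sub_mul, Matrix.one_mul, hC1, sub_self]
  have hzeroR : Rt * (1 - Rtp * Rt) = 0 := by
    rw [Matrix.mul_sub, Matrix.mul_one, ← Matrix.mul_assoc, hR1, sub_self]
  -- decomposition
  have hdecomp : A - Ct * Ctp * (A + E) * Rtp * Rt
      = (1 - Ct * Ctp) * A + (Ct * Ctp) * A * (1 - Rtp * Rt) + -((Ct * Ctp) * E * (Rtp * Rt)) := by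
    simp only [Matrix.mul_sub, Matrix.sub_mul, Matrix.mul_add, Matrix.add_mul,
      Matrix.one_mul, Matrix.mul_one, Matrix.mul_assoc]
    abel
  rw [hdecomp]
  -- triangle inequality
  have htri : frobNorm ((1 - Ct * Ctp) * A + (Ct * Ctp) * A * (1 - Rtp * Rt)
        + -((Ct * Ctp) * E * (Rtp * Rt)))
      ≤ frobNorm ((1 - Ct * Ctp) * A) + frobNorm ((Ct * Ctp) * A * (1 - Rtp * Rt))
        + frobNorm ((Ct * Ctp) * E * (Rtp * Rt)) := by
    refine (frobNorm_add_le _ _).trans ?_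
    rw [frobNorm_neg]
    exact add_le_add (frobNorm_add_le _ _) (le_refl _)
  refine htri.trans ?_
  -- term 1
  have hb1 : frobNorm ((1 - Ct * Ctp) * A) ≤ frobNorm E * frobNorm Vp := by
    have key1 : (1 - Ct * Ctp) * A = -((1 - Ct * Ctp) * (EJ * (Vpᴴ * Vᴴ))) := by
      rw [← hA1, hCsub, ← Matrix.mul_assoc, Matrix.mul_sub (1 - Ct * Ctp) Ct EJ, hzeroC,
        zero_sub, Matrix.neg_mul, Matrix.mul_assoc]
    rw [key1, frobNorm_neg]
    calc frobNorm ((1 - Ct * Ctp) * (EJ * (Vpᴴ * Vᴴ)))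
        ≤ frobNorm (EJ * (Vpᴴ * Vᴴ)) := frobNorm_proj_left _ _ h1Ph h1PP
      _ ≤ frobNorm EJ * frobNorm (Vpᴴ * Vᴴ) := frobNorm_mul_le _ _
      _ = frobNorm EJ * frobNorm Vp := by
          rw [← Matrix.conjTranspose_mul, frobNorm_conjTranspose,
            frobNorm_unitary_left V Vp hV]
      _ ≤ frobNorm E * frobNorm Vp := by
          apply mul_le_mul_of_nonneg_right _ (frobNorm_nonneg Vp)
          rw [hEJ]; exact frobNorm_col_submatrix_le E κ
  -- term 2
  have hb2 : frobNorm ((Ct * Ctp) * A * (1 - Rtp * Rt)) ≤ frobNorm Wp * frobNorm E := by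
    have key2 : A * (1 - Rtp * Rt) = -((W * (Wp * EI)) * (1 - Rtp * Rt)) := by
      rw [← hA2, Matrix.mul_assoc (W * Wp) R (1 - Rtp * Rt), hRsub,
        Matrix.sub_mul Rt EI (1 - Rtp * Rt), hzeroR, zero_sub, Matrix.mul_neg,
        Matrix.mul_assoc W Wp (EI * (1 - Rtp * Rt)), ← Matrix.mul_assoc Wp EI (1 - Rtp * Rt),
        ← Matrix.mul_assoc W (Wp * EI) (1 - Rtp * Rt)]
    calc frobNorm ((Ct * Ctp) * A * (1 - Rtp * Rt))
        = frobNorm ((Ct * Ctp) * (A * (1 - Rtp * Rt))) := by rw [Matrix.mul_assoc]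
      _ ≤ frobNorm (A * (1 - Rtp * Rt)) := frobNorm_proj_left _ _ hC3 hPP
      _ = frobNorm ((W * (Wp * EI)) * (1 - Rtp * Rt)) := by rw [key2, frobNorm_neg]
      _ ≤ frobNorm (W * (Wp * EI)) := frobNorm_proj_right _ _ h1Qh h1QQ
      _ = frobNorm (Wp * EI) := frobNorm_unitary_left W _ hW
      _ ≤ frobNorm Wp * frobNorm EI := frobNorm_mul_le _ _
      _ ≤ frobNorm Wp * frobNorm E := by
          apply mul_le_mul_of_nonneg_left _ (frobNorm_nonneg Wp)
          rw [hEI]; exact frobNorm_row_submatrix_le E ι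
  -- term 3
  have hb3 : frobNorm ((Ct * Ctp) * E * (Rtp * Rt)) ≤ frobNorm E := by
    calc frobNorm ((Ct * Ctp) * E * (Rtp * Rt))
        ≤ frobNorm ((Ct * Ctp) * E) := frobNorm_proj_right _ _ hR4 hQQ
      _ ≤ frobNorm E := frobNorm_proj_left _ _ hC3 hPP
  have hE := frobNorm_nonneg E
  have hVpn := frobNorm_nonneg Vp
  have hWpn := frobNorm_nonneg Wp
  nlinarith [hb1, hb2, hb3]
end

section
/- One-sided projection perturbation bounds (Lemma 8.1): Under the stated assumptions, ‖A − C̃ C̃† Ã‖_F ≤ ‖E_J‖_F · ‖C† A‖_F + ‖E‖_F, and ‖A − Ã R̃† R̃‖_F ≤ ‖E_I‖_F · ‖A R†‖_F + ‖E‖_F. -/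
open Matrix

namespace FrobAux

variable {𝕂 : Type} [RCLike 𝕂]

def sq {m n : ℕ} (M : Matrix (Fin m) (Fin n) 𝕂) : ℝ := ∑ i, ∑ j, ‖M i j‖ ^ 2

lemma sq_nonneg' {m n : ℕ} (M : Matrix (Fin m) (Fin n) 𝕂) : 0 ≤ sq M := by
  apply Finset.sum_nonneg; intros; apply Finset.sum_nonneg; intros; positivity

lemma frob_eq {m n : ℕ} (M : Matrix (Fin m) (Fin n) 𝕂) : frobNorm M = Real.sqrt (sq M) := rfl

lemma sq_conjTranspose {m n : ℕ} (M : Matrix (Fin m) (Fin n) 𝕂) : sq Mᴴ = sq M := by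
  rw [sq, sq, Finset.sum_comm]
  simp [conjTranspose_apply]

lemma frob_conjTranspose {m n : ℕ} (M : Matrix (Fin m) (Fin n) 𝕂) :
    frobNorm Mᴴ = frobNorm M := by rw [frob_eq, frob_eq, sq_conjTranspose]

lemma frob_le_frob {m n : ℕ} {M N : Matrix (Fin m) (Fin n) 𝕂} (h : sq M ≤ sq N) :
    frobNorm M ≤ frobNorm N := Real.sqrt_le_sqrt h

lemma sq_eq_norm {m n : ℕ} (M : Matrix (Fin m) (Fin n) 𝕂) :
    frobNorm M = ‖(WithLp.equiv 2 (Fin m × Fin n → 𝕂)).symm (fun p => M p.1 p.2)‖ := by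
  rw [EuclideanSpace.norm_eq, frob_eq, sq, Fintype.sum_prod_type]
  rfl

lemma frob_add_le {m n : ℕ} (M N : Matrix (Fin m) (Fin n) 𝕂) :
    frobNorm (M + N) ≤ frobNorm M + frobNorm N := by
  rw [sq_eq_norm, sq_eq_norm, sq_eq_norm]
  exact norm_add_le ((WithLp.equiv 2 (Fin m × Fin n → 𝕂)).symm (fun p => M p.1 p.2))
    ((WithLp.equiv 2 (Fin m × Fin n → 𝕂)).symm (fun p => N p.1 p.2))

lemma frob_neg {m n : ℕ} (M : Matrix (Fin m) (Fin n) 𝕂) : frobNorm (-M) = frobNorm M := by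
  rw [frob_eq, frob_eq]; congr 1; simp [sq]

lemma frob_nonneg {m n : ℕ} (M : Matrix (Fin m) (Fin n) 𝕂) : 0 ≤ frobNorm M :=
  Real.sqrt_nonneg _

lemma sq_mul_le {m n l : ℕ} (X : Matrix (Fin m) (Fin l) 𝕂) (Y : Matrix (Fin l) (Fin n) 𝕂) :
    sq (X * Y) ≤ sq X * sq Y := by
  have h : ∀ i j, ‖(X * Y) i j‖ ^ 2 ≤ (∑ t, ‖X i t‖ ^ 2) * (∑ t, ‖Y t j‖ ^ 2) := by
    intro i j
    have h1 : ‖(X * Y) i j‖ ≤ ∑ t, ‖X i t‖ * ‖Y t j‖ := by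
      rw [mul_apply]
      exact le_trans (norm_sum_le _ _) (by simp [norm_mul] )
    calc ‖(X * Y) i j‖ ^ 2 ≤ (∑ t, ‖X i t‖ * ‖Y t j‖) ^ 2 := by
          apply pow_le_pow_left₀ (norm_nonneg _) h1
      _ ≤ _ := Finset.sum_mul_sq_le_sq_mul_sq _ _ _
  calc sq (X * Y) ≤ ∑ i, ∑ j, (∑ t, ‖X i t‖ ^ 2) * (∑ t, ‖Y t j‖ ^ 2) := by
        apply Finset.sum_le_sum; intro i _; apply Finset.sum_le_sum; intro j _; exact h i j
    _ = sq X * sq Y := by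
        have hY : sq Y = ∑ j : Fin n, ∑ t : Fin l, ‖Y t j‖ ^ 2 := Finset.sum_comm
        rw [sq, hY, Finset.sum_mul]
        apply Finset.sum_congr rfl; intro i _
        rw [← Finset.mul_sum]

lemma frob_mul_le {m n l : ℕ} (X : Matrix (Fin m) (Fin l) 𝕂) (Y : Matrix (Fin l) (Fin n) 𝕂) :
    frobNorm (X * Y) ≤ frobNorm X * frobNorm Y := by
  rw [frob_eq, frob_eq, frob_eq, ← Real.sqrt_mul (sq_nonneg' X)]
  exact Real.sqrt_le_sqrt (sq_mul_le X Y)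

lemma sq_eq_retrace {m n : ℕ} (M : Matrix (Fin m) (Fin n) 𝕂) :
    sq M = RCLike.re (Mᴴ * M).trace := by
  rw [trace, sq, Finset.sum_comm]
  rw [map_sum]
  apply Finset.sum_congr rfl; intro j _
  rw [diag_apply, mul_apply, map_sum]
  apply Finset.sum_congr rfl; intro i _
  rw [conjTranspose_apply, ← starRingEnd_apply, RCLike.conj_mul, ← RCLike.ofReal_pow,
    RCLike.ofReal_re]

lemma sq_proj {m n : ℕ} (Q : Matrix (Fin m) (Fin m) 𝕂) (hQH : Qᴴ = Q) (hQ2 : Q * Q = Q)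
    (X : Matrix (Fin m) (Fin n) 𝕂) : sq (Q * X) ≤ sq X := by
  have key : ∀ (R : Matrix (Fin m) (Fin m) 𝕂), Rᴴ = R → R * R = R →
      sq (R * X) = RCLike.re (Xᴴ * (R * X)).trace := by
    intro R hRH hR2
    have hh : (R * X)ᴴ * (R * X) = Xᴴ * (R * X) := by
      rw [conjTranspose_mul, hRH, Matrix.mul_assoc Xᴴ, ← Matrix.mul_assoc R R X, hR2]
    rw [sq_eq_retrace, hh]
  have h1 := key Q hQH hQ2
  have h1Q : (1 - Q)ᴴ = 1 - Q := by
    rw [conjTranspose_sub, hQH, conjTranspose_one]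
  have h2Q : (1 - Q) * (1 - Q) = 1 - Q := by
    rw [Matrix.sub_mul, Matrix.mul_sub, Matrix.mul_sub, hQ2]
    simp
  have h2 := key (1 - Q) h1Q h2Q
  have h3 : sq (Q * X) + sq ((1 - Q) * X) = sq X := by
    rw [h1, h2, ← map_add, ← trace_add, ← Matrix.mul_add, sq_eq_retrace]
    congr 3
    rw [Matrix.sub_mul, Matrix.one_mul]
    abel
  nlinarith [sq_nonneg' ((1 - Q) * X)]

lemma frob_proj_le {m n : ℕ} (Q : Matrix (Fin m) (Fin m) 𝕂) (hQH : Qᴴ = Q) (hQ2 : Q * Q = Q)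
    (X : Matrix (Fin m) (Fin n) 𝕂) : frobNorm (Q * X) ≤ frobNorm X :=
  frob_le_frob (sq_proj Q hQH hQ2 X)


variable {𝕂 : Type} [RCLike 𝕂]

lemma isMPInv_conjT {m n : ℕ} {M : Matrix (Fin m) (Fin n) 𝕂} {P : Matrix (Fin n) (Fin m) 𝕂}
    (h : IsMPInv M P) : IsMPInv Mᴴ Pᴴ := by
  obtain ⟨h1, h2, h3, h4⟩ := h
  refine ⟨?_, ?_, ?_, ?_⟩
  · have e1 : Mᴴ * Pᴴ * Mᴴ = (M * (P * M))ᴴ := by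
      rw [conjTranspose_mul M (P * M), conjTranspose_mul P M]
    rw [e1, ← Matrix.mul_assoc, h1]
  · have e1 : Pᴴ * Mᴴ * Pᴴ = (P * (M * P))ᴴ := by
      rw [conjTranspose_mul P (M * P), conjTranspose_mul M P]
    rw [e1, ← Matrix.mul_assoc, h2]
  · rw [← conjTranspose_mul P M, conjTranspose_conjTranspose, h4]
  · rw [← conjTranspose_mul M P, conjTranspose_conjTranspose, h3]

lemma range_le {m n q : ℕ} (A : Matrix (Fin m) (Fin n) 𝕂) (κ : Fin q ↪ Fin n) :
    LinearMap.range (A.submatrix id ⇑κ).mulVecLin ≤ LinearMap.range A.mulVecLin := by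
  have hK : A.submatrix id ⇑κ =
      A * Matrix.of (fun (l : Fin n) (j : Fin q) => if l = κ j then (1 : 𝕂) else 0) := by
    ext i j
    simp [Matrix.mul_apply, Matrix.submatrix_apply, mul_ite]
  rw [hK, Matrix.mulVecLin_mul]
  exact LinearMap.range_comp_le_range _ _

lemma proj_id {m n q : ℕ} {C : Matrix (Fin m) (Fin q) 𝕂} {Cp : Matrix (Fin q) (Fin m) 𝕂}
    {A : Matrix (Fin m) (Fin n) 𝕂} (h1 : C * Cp * C = C)
    (hr : LinearMap.range A.mulVecLin ≤ LinearMap.range C.mulVecLin) :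
    C * Cp * A = A := by
  have hv : ∀ v : Fin n → 𝕂, (C * Cp * A) *ᵥ v = A *ᵥ v := by
    intro v
    obtain ⟨y, hy⟩ := hr ⟨v, rfl⟩
    have hy' : C *ᵥ y = A *ᵥ v := hy
    calc (C * Cp * A) *ᵥ v = (C * Cp) *ᵥ (A *ᵥ v) := (Matrix.mulVec_mulVec v (C * Cp) A).symm
      _ = (C * Cp) *ᵥ (C *ᵥ y) := by rw [hy']
      _ = (C * Cp * C) *ᵥ y := Matrix.mulVec_mulVec y (C * Cp) C
      _ = C *ᵥ y := by rw [h1]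
      _ = A *ᵥ v := hy'
  ext i j
  have := congrFun (hv (Pi.single j 1)) i
  simpa [Matrix.mulVec_single_one] using this

lemma col_case {m n q k : ℕ} (A E : Matrix (Fin m) (Fin n) 𝕂) (hA : A.rank = k)
    (κ : Fin q ↪ Fin n) (hC : (A.submatrix id ⇑κ).rank = k)
    (Cp : Matrix (Fin q) (Fin m) 𝕂) (hCp : IsMPInv (A.submatrix id ⇑κ) Cp)
    (Ctp : Matrix (Fin q) (Fin m) 𝕂) (hCtp : IsMPInv ((A + E).submatrix id ⇑κ) Ctp) :
    frobNorm (A - (A + E).submatrix id ⇑κ * Ctp * (A + E)) ≤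
      frobNorm (E.submatrix id ⇑κ) * frobNorm (Cp * A) + frobNorm E := by
  set C := A.submatrix id ⇑κ with hCdef
  set EJ := E.submatrix id ⇑κ with hEJdef
  set Ct := (A + E).submatrix id ⇑κ with hCtdef
  have hCt : Ct = C + EJ := rfl
  set P := Ct * Ctp with hPdef
  have hPH : Pᴴ = P := hCtp.2.2.1
  have hPCt : P * Ct = Ct := hCtp.1
  have hPP : P * P = P := by
    rw [hPdef, ← Matrix.mul_assoc, hCtp.1]
  have heq : LinearMap.range C.mulVecLin = LinearMap.range A.mulVecLin :=
    Submodule.eq_of_le_of_finrank_le (range_le A κ) (le_of_eq (by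
      rw [show Module.finrank 𝕂 ↥(LinearMap.range A.mulVecLin) = A.rank from rfl,
        show Module.finrank 𝕂 ↥(LinearMap.range C.mulVecLin) = C.rank from rfl, hA, hC]))
  have hCA : C * (Cp * A) = A := by
    rw [← Matrix.mul_assoc]; exact proj_id hCp.1 heq.ge
  set G := Cp * A with hGdef
  have hPC : P * C = C + EJ - P * EJ := by
    have h := hPCt
    rw [hCt, Matrix.mul_add] at h
    exact eq_sub_of_add_eq h
  have h1 : P * A = (C + EJ - P * EJ) * G := by
    conv_lhs => rw [← hCA, ← Matrix.mul_assoc, hPC]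
  have key : A - P * (A + E) = -((1 - P) * EJ * G) - P * E := by
    have expand : A - P * (A + E) = C * G - (C + EJ - P * EJ) * G - P * E := by
      rw [Matrix.mul_add, ← h1, hCA]; abel
    rw [expand, Matrix.sub_mul (1 : Matrix (Fin m) (Fin m) 𝕂) P EJ, Matrix.one_mul,
      Matrix.sub_mul EJ (P * EJ) G, Matrix.sub_mul, Matrix.add_mul]
    abel
  have hQH : (1 - P)ᴴ = 1 - P := by rw [conjTranspose_sub, hPH, conjTranspose_one]
  have hQ2 : (1 - P) * (1 - P) = 1 - P := by
    rw [Matrix.sub_mul, Matrix.mul_sub, Matrix.mul_sub, hPP]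
    simp
  have step1 : frobNorm (A - P * (A + E)) ≤ frobNorm ((1 - P) * EJ * G) + frobNorm (P * E) := by
    rw [key, sub_eq_add_neg]
    refine le_trans (frob_add_le _ _) ?_
    rw [frob_neg, frob_neg]
  have b1 : frobNorm ((1 - P) * EJ * G) ≤ frobNorm EJ * frobNorm G :=
    le_trans (frob_mul_le _ _)
      (mul_le_mul_of_nonneg_right (frob_proj_le (1 - P) hQH hQ2 EJ) (frob_nonneg G))
  have b2 : frobNorm (P * E) ≤ frobNorm E := frob_proj_le P hPH hPP E
  calc frobNorm (A - Ct * Ctp * (A + E)) = frobNorm (A - P * (A + E)) := by rw [hPdef]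
    _ ≤ frobNorm EJ * frobNorm G + frobNorm E := by linarith
end FrobAux

/-- Lemma 8.1: one-sided projection perturbation bounds. -/
theorem one_sided_projection_perturbation {𝕂 : Type} [RCLike 𝕂] {m n k p q : ℕ}
    (A E : Matrix (Fin m) (Fin n) 𝕂)
    (hrankA : A.rank = k)
    (ι : Fin p ↪ Fin m) (κ : Fin q ↪ Fin n)
    (hrankC : (A.submatrix id ⇑κ).rank = k)
    (hrankU : (A.submatrix ⇑ι ⇑κ).rank = k)
    (hrankR : (A.submatrix ⇑ι id).rank = k)
    (Cp : Matrix (Fin q) (Fin m) 𝕂) (hCp : IsMPInv (A.submatrix id ⇑κ) Cp)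
    (Rp : Matrix (Fin n) (Fin p) 𝕂) (hRp : IsMPInv (A.submatrix ⇑ι id) Rp)
    (Ctp : Matrix (Fin q) (Fin m) 𝕂) (hCtp : IsMPInv ((A + E).submatrix id ⇑κ) Ctp)
    (Rtp : Matrix (Fin n) (Fin p) 𝕂) (hRtp : IsMPInv ((A + E).submatrix ⇑ι id) Rtp) :
    frobNorm (A - (A + E).submatrix id ⇑κ * Ctp * (A + E)) ≤
        frobNorm (E.submatrix id ⇑κ) * frobNorm (Cp * A) + frobNorm E ∧
    frobNorm (A - (A + E) * Rtp * (A + E).submatrix ⇑ι id) ≤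
        frobNorm (E.submatrix ⇑ι id) * frobNorm (A * Rp) + frobNorm E := by
  constructor
  · exact FrobAux.col_case A E hrankA κ hrankC Cp hCp Ctp hCtp
  · letI : PartialOrder 𝕂 := RCLike.toPartialOrder
    letI : StarOrderedRing 𝕂 := RCLike.toStarOrderedRing
    have hA' : Aᴴ.rank = k := by rw [Matrix.rank_conjTranspose, hrankA]
    have eR : Aᴴ.submatrix id ⇑ι = (A.submatrix ⇑ι id)ᴴ :=
      (Matrix.conjTranspose_submatrix A ⇑ι id).symm
    have hC' : (Aᴴ.submatrix id ⇑ι).rank = k := by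
      rw [eR, Matrix.rank_conjTranspose, hrankR]
    have hCp' : IsMPInv (Aᴴ.submatrix id ⇑ι) Rpᴴ := by
      have h := FrobAux.isMPInv_conjT hRp
      rwa [Matrix.conjTranspose_submatrix] at h
    have hCtp' : IsMPInv ((Aᴴ + Eᴴ).submatrix id ⇑ι) Rtpᴴ := by
      have h := FrobAux.isMPInv_conjT hRtp
      rwa [Matrix.conjTranspose_submatrix, Matrix.conjTranspose_add] at h
    have h2 := FrobAux.col_case Aᴴ Eᴴ hA' ι hC' Rpᴴ hCp' Rtpᴴ hCtp'
    have eC : Aᴴ + Eᴴ = (A + E)ᴴ := (Matrix.conjTranspose_add A E).symm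
    rw [eC] at h2
    have e1 : (A + E)ᴴ.submatrix id ⇑ι = ((A + E).submatrix ⇑ι id)ᴴ :=
      (Matrix.conjTranspose_submatrix (A + E) ⇑ι id).symm
    rw [e1] at h2
    have e2 : ((A + E).submatrix ⇑ι id)ᴴ * Rtpᴴ * (A + E)ᴴ
        = ((A + E) * Rtp * (A + E).submatrix ⇑ι id)ᴴ := by
      simp [Matrix.conjTranspose_mul, Matrix.mul_assoc]
    have e4 : Eᴴ.submatrix id ⇑ι = (E.submatrix ⇑ι id)ᴴ :=
      (Matrix.conjTranspose_submatrix E ⇑ι id).symm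
    have e5 : Rpᴴ * Aᴴ = (A * Rp)ᴴ := (Matrix.conjTranspose_mul A Rp).symm
    rw [e2, ← Matrix.conjTranspose_sub, e4, e5, FrobAux.frob_conjTranspose,
      FrobAux.frob_conjTranspose, FrobAux.frob_conjTranspose,
      FrobAux.frob_conjTranspose] at h2
    exact h2
end

section
/- Truncating after forming the CUR approximation can be strictly worse than truncating the middle matrix (Section 9 counterexample): Let A = [[-1, 0, 10], [0, 2, 0], [10, 0, 100]] ∈ ℝ^{3×3}, C = A(:, {1,2}) (first two columns), R = A({1,2}, :) (first two rows), and U = A({1,2},{1,2}) = [[-1, 0], [0, 2]]. Let U_1 denote the best rank-1 approximation of U and (C U† R)_1 the best rank-1 approximation of C U† R. Then ‖A − C U_1† R‖₂ < ‖A − (C U† R)_1‖₂ and ‖A − C U_1† R‖_F < ‖A − (C U† R)_1‖_F; concretely, ‖A − C U_1† R‖_F = 101 while ‖A − (C U† R)_1‖_F = √40004, and ‖A − C U_1† R‖₂ ≤ 101 while ‖A − (C U† R)_1‖₂ = 200. -/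
open Matrix

section Helpers

open Matrix

/-- sum of eigenvalues equals trace, real symmetric case -/
lemma sum_eig_eq_trace {n : ℕ} {N : Matrix (Fin n) (Fin n) ℝ} (hN : N.IsHermitian) :
    ∑ i, hN.eigenvalues i = N.trace := by
  have h := hN.spectral_theorem
  symm
  set V : Matrix (Fin n) (Fin n) ℝ := (hN.eigenvectorUnitary : Matrix (Fin n) (Fin n) ℝ) with hV
  have hsm : star V * V = 1 := Unitary.coe_star_mul_self hN.eigenvectorUnitary
  calc N.trace = (V * (diagonal (RCLike.ofReal ∘ hN.eigenvalues) * star V)).trace := by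
        rw [← Matrix.mul_assoc]; exact congrArg Matrix.trace h
    _ = ((diagonal (RCLike.ofReal ∘ hN.eigenvalues) * star V) * V).trace :=
        (Matrix.trace_mul_comm _ _)
    _ = (diagonal (RCLike.ofReal ∘ hN.eigenvalues)).trace := by
        rw [Matrix.mul_assoc, hsm, Matrix.mul_one]
    _ = ∑ i, hN.eigenvalues i := by simp [Matrix.trace_diagonal]

/-- every eigenvalue of a (hermitian) diagonal matrix is one of the diagonal entries -/
lemma eig_of_diag {n : ℕ} {N : Matrix (Fin n) (Fin n) ℝ} (hN : N.IsHermitian)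
    {d : Fin n → ℝ} (hd : N = diagonal d) (j : Fin n) :
    ∃ i, hN.eigenvalues j = d i := by
  have hv := hN.mulVec_eigenvectorBasis j
  set v : Fin n → ℝ := ⇑(hN.eigenvectorBasis j) with hvdef
  have hvne : v ≠ 0 := by
    intro h0
    exact (hN.eigenvectorBasis.orthonormal.ne_zero j) (by ext i; exact congrFun h0 i)
  obtain ⟨i, hi⟩ := Function.ne_iff.mp hvne
  refine ⟨i, ?_⟩
  have hv2 : diagonal d *ᵥ v = hN.eigenvalues j • v := by rw [← hd]; exact hv
  have h3 := congrFun hv2 i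
  rw [Matrix.mulVec_diagonal] at h3
  simp only [Pi.smul_apply, smul_eq_mul] at h3
  have hi' : v i ≠ 0 := by simpa using hi
  exact ((mul_left_inj' hi').mp h3).symm

lemma specNorm_aux {p q : ℕ} (M : Matrix (Fin p) (Fin q) ℝ) :
    specNorm M = ((List.ofFn fun j : Fin q =>
      Real.sqrt ((Matrix.isHermitian_conjTranspose_mul_self M).eigenvalues j)).insertionSort
      (· ≥ ·)).getD 0 0 := rfl

lemma sortedHead_le {L : List ℝ} {a : ℝ} (ha : 0 ≤ a) (h : ∀ x ∈ L, x ≤ a) :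
    ((L.insertionSort (· ≥ ·)).getD 0 0) ≤ a := by
  rcases hS : L.insertionSort (· ≥ ·) with _ | ⟨b, t⟩
  · simpa using ha
  · have hb : b ∈ L := by
      have : b ∈ L.insertionSort (· ≥ ·) := by rw [hS]; exact List.mem_cons_self
      simpa using this
    simpa using h b hb

lemma sortedHead_eq {L : List ℝ} {a : ℝ} (hmem : a ∈ L) (h : ∀ x ∈ L, x ≤ a) :
    ((L.insertionSort (· ≥ ·)).getD 0 0) = a := by
  have hs := List.pairwise_insertionSort (α := ℝ) (· ≥ ·) L
  rcases hS : L.insertionSort (· ≥ ·) with _ | ⟨b, t⟩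
  · exfalso
    have h2 : a ∈ L.insertionSort (· ≥ ·) := by simpa using hmem
    rw [hS] at h2; simp at h2
  · rw [hS] at hs
    have hb : b ∈ L := by
      have : b ∈ L.insertionSort (· ≥ ·) := by rw [hS]; exact List.mem_cons_self
      simpa using this
    have hba : b ≤ a := h b hb
    have hab : a ≤ b := by
      have h2 : a ∈ b :: t := by rw [← hS]; simpa using hmem
      rcases List.mem_cons.mp h2 with h1 | h1
      · exact le_of_eq h1
      · exact List.rel_of_pairwise_cons hs h1
    exact le_antisymm hba hab

/-- frobNorm comparison gives sum-of-squares comparison -/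
lemma frob_sq_le {m n : ℕ} {X Y : Matrix (Fin m) (Fin n) ℝ}
    (h : frobNorm X ≤ frobNorm Y) :
    ∑ i, ∑ j, ‖X i j‖ ^ 2 ≤ ∑ i, ∑ j, ‖Y i j‖ ^ 2 := by
  have hx : (0:ℝ) ≤ ∑ i, ∑ j, ‖X i j‖ ^ 2 :=
    Finset.sum_nonneg fun i _ => Finset.sum_nonneg fun j _ => sq_nonneg _
  have hy : (0:ℝ) ≤ ∑ i, ∑ j, ‖Y i j‖ ^ 2 :=
    Finset.sum_nonneg fun i _ => Finset.sum_nonneg fun j _ => sq_nonneg _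
  calc ∑ i, ∑ j, ‖X i j‖ ^ 2 = (frobNorm X) ^ 2 := (Real.sq_sqrt hx).symm
    _ ≤ (frobNorm Y) ^ 2 := by
        apply pow_le_pow_left₀ (Real.sqrt_nonneg _) h
    _ = ∑ i, ∑ j, ‖Y i j‖ ^ 2 := Real.sq_sqrt hy

/-- a 2x2 real matrix of rank ≤ 1 has zero determinant -/
lemma det_eq_zero_of_rank_le_one {X : Matrix (Fin 2) (Fin 2) ℝ} (h : X.rank ≤ 1) :
    X 0 0 * X 1 1 - X 0 1 * X 1 0 = 0 := by
  rw [← Matrix.det_fin_two]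
  by_contra hdet
  have : IsUnit X := X.isUnit_iff_isUnit_det.mpr (isUnit_iff_ne_zero.mpr hdet)
  have h2 := Matrix.rank_of_isUnit X this
  rw [h2] at h
  simp at h

/-- central 2x2 minor of a 3x3 matrix of rank ≤ 1 vanishes -/
lemma minor_eq_zero_of_rank_le_one {X : Matrix (Fin 3) (Fin 3) ℝ} (h : X.rank ≤ 1) :
    X 1 1 * X 2 2 - X 1 2 * X 2 1 = 0 := by
  set P : Matrix (Fin 2) (Fin 3) ℝ := !![0,1,0;0,0,1]
  set Q : Matrix (Fin 3) (Fin 2) ℝ := !![0,0;1,0;0,1]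
  have hM : P * X * Q = !![X 1 1, X 1 2; X 2 1, X 2 2] := by
    ext i j
    fin_cases i <;> fin_cases j <;>
      simp [P, Q, Matrix.mul_apply, Matrix.vecMul, dotProduct, Fin.sum_univ_three]
  have hrank : (P * X * Q).rank ≤ 1 := by
    calc (P * X * Q).rank ≤ (P * X).rank := Matrix.rank_mul_le_left _ _
      _ ≤ X.rank := Matrix.rank_mul_le_right _ _
      _ ≤ 1 := h
  rw [hM] at hrank
  have := det_eq_zero_of_rank_le_one hrank
  simpa using this

/-- rank of column*row product is at most 1 -/
lemma rank_le_one_of_eq_mul {m n : ℕ} {X : Matrix (Fin m) (Fin n) ℝ}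
    (P : Matrix (Fin m) (Fin 1) ℝ) (Q : Matrix (Fin 1) (Fin n) ℝ) (h : X = P * Q) :
    X.rank ≤ 1 := by
  rw [h]
  calc (P * Q).rank ≤ P.rank := Matrix.rank_mul_le_left _ _
    _ ≤ 1 := by simpa using P.rank_le_card_width

lemma eq_of_sq_le_zero {x y : ℝ} (h : (x - y)^2 ≤ 0) : x = y := by
  nlinarith [sq_nonneg (x - y)]

end Helpers

set_option maxHeartbeats 1000000 in
/-- Section 9 counterexample: truncating after forming the CUR approximation can be
strictly worse than truncating the middle matrix. -/
theorem truncation_order_counterexample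
    (A : Matrix (Fin 3) (Fin 3) ℝ) (C : Matrix (Fin 3) (Fin 2) ℝ)
    (R : Matrix (Fin 2) (Fin 3) ℝ) (U : Matrix (Fin 2) (Fin 2) ℝ)
    (hA : A = !![(-1 : ℝ), 0, 10; 0, 2, 0; 10, 0, 100])
    (hC : C = !![(-1 : ℝ), 0; 0, 2; 10, 0])
    (hR : R = !![(-1 : ℝ), 0, 10; 0, 2, 0])
    (hU : U = !![(-1 : ℝ), 0; 0, 2])
    (Up : Matrix (Fin 2) (Fin 2) ℝ) (hUp : IsMPInv U Up)
    (U1 : Matrix (Fin 2) (Fin 2) ℝ) (hU1 : IsTruncSVD U U1 1)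
    (U1p : Matrix (Fin 2) (Fin 2) ℝ) (hU1p : IsMPInv U1 U1p)
    (CUR1 : Matrix (Fin 3) (Fin 3) ℝ) (hCUR1 : IsTruncSVD (C * Up * R) CUR1 1) :
    specNorm (A - C * U1p * R) < specNorm (A - CUR1) ∧
    frobNorm (A - C * U1p * R) < frobNorm (A - CUR1) ∧
    frobNorm (A - C * U1p * R) = 101 ∧
    frobNorm (A - CUR1) = Real.sqrt 40004 ∧
    specNorm (A - C * U1p * R) ≤ 101 ∧
    specNorm (A - CUR1) = 200 := by
  subst hA; subst hC; subst hR; subst hU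
  -- Step 1: Up is the inverse of U
  have hUp' : Up = !![(-1:ℝ),0;0,1/2] := by
    obtain ⟨h1, -, -, -⟩ := hUp
    have e := fun i j => congrFun (congrFun h1 i) j
    have e00 := e 0 0; have e01 := e 0 1; have e10 := e 1 0; have e11 := e 1 1
    simp only [Matrix.mul_apply, Fin.sum_univ_two] at e00 e01 e10 e11
    norm_num [Matrix.vecHead, Matrix.vecTail] at e00 e01 e10 e11
    ext i j
    fin_cases i <;> fin_cases j <;> simp <;> linarith
  -- Step 2: the CUR product
  have hB : !![(-1:ℝ),0;0,2;10,0] * Up * !![(-1:ℝ),0,10;0,2,0]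
      = !![(-1:ℝ),0,10;0,2,0;10,0,-100] := by
    rw [hUp']
    ext i j
    fin_cases i <;> fin_cases j <;>
      simp only [Matrix.mul_apply, Fin.sum_univ_two] <;>
      norm_num [Matrix.vecHead, Matrix.vecTail]
  rw [hB] at hCUR1
  -- Step 3: U1 is the best rank-1 approximation of U
  have hU1' : U1 = !![(0:ℝ),0;0,2] := by
    have hrk : (!![(0:ℝ),0;0,2] : Matrix (Fin 2) (Fin 2) ℝ).rank ≤ 1 := by
      refine rank_le_one_of_eq_mul !![(0:ℝ);1] !![(0:ℝ),2] ?_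
      ext i j
      fin_cases i <;> fin_cases j <;>
        simp only [Matrix.mul_apply, Fin.sum_univ_one] <;> norm_num [Matrix.vecHead, Matrix.vecTail]
    have hopt := hU1.2 _ hrk
    have hsum := frob_sq_le hopt
    simp only [Matrix.sub_apply, Fin.sum_univ_two, Real.norm_eq_abs, sq_abs] at hsum
    norm_num [Matrix.vecHead, Matrix.vecTail] at hsum
    have hdet := det_eq_zero_of_rank_le_one hU1.1
    have hd1 : (1:ℝ) ≤ U1 1 1 := by
      nlinarith [hsum, sq_nonneg (U1 0 1), sq_nonneg (U1 1 0), sq_nonneg (1 + U1 0 0)]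
    have ha0 : U1 0 0 = 0 := by
      rcases le_or_gt (U1 0 0) 0 with h | h
      · rcases eq_or_lt_of_le h with h2 | h2
        · exact h2
        · exfalso
          have key : (0:ℝ) ≤ (-(U1 0 0)) * (U1 1 1 - 1) :=
            mul_nonneg (by linarith) (by linarith)
          nlinarith [sq_nonneg (U1 0 1 - U1 1 0), sq_nonneg (U1 0 1 + U1 1 0), hdet, hsum, key]
      · exfalso
        have key : (0:ℝ) ≤ (U1 0 0) * (U1 1 1 - 1) := mul_nonneg h.le (by linarith)
        nlinarith [sq_nonneg (U1 0 1 - U1 1 0), sq_nonneg (U1 0 1 + U1 1 0), hdet, hsum, key]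
    have hd2 : U1 1 1 = 2 := by
      nlinarith [hsum, sq_nonneg (U1 0 1), sq_nonneg (U1 1 0), ha0, sq_nonneg (2 - U1 1 1)]
    have hb0 : U1 0 1 = 0 := by
      apply eq_of_sq_le_zero
      nlinarith [hsum, sq_nonneg (U1 1 0), ha0, hd2]
    have hc0 : U1 1 0 = 0 := by
      apply eq_of_sq_le_zero
      nlinarith [hsum, sq_nonneg (U1 0 1), ha0, hd2]
    ext i j
    fin_cases i <;> fin_cases j <;> simp <;>
      first | exact ha0 | exact hb0 | exact hc0 | exact hd2
  rw [hU1'] at hU1p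
  -- Step 4: the pseudoinverse of U1
  have hU1p' : U1p = !![(0:ℝ),0;0,1/2] := by
    obtain ⟨k1, k2, k3, k4⟩ := hU1p
    have f1 := congrFun (congrFun k1 1) 1
    have f2 := congrFun (congrFun k2 0) 0
    have f3 := congrFun (congrFun k3 1) 0
    have f4 := congrFun (congrFun k4 1) 0
    simp only [Matrix.mul_apply, Matrix.conjTranspose_apply, star_trivial,
      Fin.sum_univ_two] at f1 f2 f3 f4
    norm_num [Matrix.vecHead, Matrix.vecTail] at f1 f2 f3 f4
    ext i j
    fin_cases i <;> fin_cases j <;> simp <;> nlinarith [f1, f2, f3, f4]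
  -- Step 5: A - C * U1p * R
  have hM1 : !![(-1:ℝ),0,10;0,2,0;10,0,100] - !![(-1:ℝ),0;0,2;10,0] * U1p * !![(-1:ℝ),0,10;0,2,0]
      = !![(-1:ℝ),0,10;0,0,0;10,0,100] := by
    rw [hU1p']
    ext i j
    fin_cases i <;> fin_cases j <;>
      simp only [Matrix.sub_apply, Matrix.mul_apply, Fin.sum_univ_two] <;>
      norm_num [Matrix.vecHead, Matrix.vecTail]
  -- Step 6: CUR1 is the best rank-1 approximation of C Up R
  have hCUR1' : CUR1 = !![(-1:ℝ),0,10;0,0,0;10,0,-100] := by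
    have hrk : (!![(-1:ℝ),0,10;0,0,0;10,0,-100] : Matrix (Fin 3) (Fin 3) ℝ).rank ≤ 1 := by
      refine rank_le_one_of_eq_mul !![(1:ℝ);0;-10] !![(-1:ℝ),0,10] ?_
      ext i j
      fin_cases i <;> fin_cases j <;>
        simp only [Matrix.mul_apply, Fin.sum_univ_one] <;> norm_num [Matrix.vecHead, Matrix.vecTail]
    have hopt := hCUR1.2 _ hrk
    have hsum := frob_sq_le hopt
    simp only [Matrix.sub_apply, Fin.sum_univ_three, Real.norm_eq_abs, sq_abs] at hsum
    norm_num [Matrix.vecHead, Matrix.vecTail, Matrix.cons_val_two] at hsum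
    have hminor := minor_eq_zero_of_rank_le_one hCUR1.1
    have h22 : CUR1 2 2 ≤ -98 := by
      nlinarith [hsum, sq_nonneg (-1 - CUR1 0 0), sq_nonneg (CUR1 0 1),
        sq_nonneg (10 - CUR1 0 2), sq_nonneg (CUR1 1 0), sq_nonneg (2 - CUR1 1 1),
        sq_nonneg (CUR1 1 2), sq_nonneg (10 - CUR1 2 0), sq_nonneg (CUR1 2 1),
        sq_nonneg (100 + CUR1 2 2)]
    have h11 : CUR1 1 1 = 0 := by
      rcases le_or_gt (CUR1 1 1) 0 with h | h
      · rcases eq_or_lt_of_le h with h2 | h2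
        · exact h2
        · exfalso
          have key : (0:ℝ) ≤ (-(CUR1 1 1)) * (-(CUR1 2 2) - 98) :=
            mul_nonneg (by linarith) (by linarith)
          nlinarith [sq_nonneg (CUR1 1 2 - CUR1 2 1), sq_nonneg (CUR1 1 2 + CUR1 2 1), hminor, hsum, key,
            sq_nonneg (-1 - CUR1 0 0), sq_nonneg (CUR1 0 1), sq_nonneg (10 - CUR1 0 2),
            sq_nonneg (CUR1 1 0), sq_nonneg (10 - CUR1 2 0), sq_nonneg (CUR1 2 1),
            sq_nonneg (-100 - CUR1 2 2)]
      · exfalso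
        have key : (0:ℝ) ≤ (CUR1 1 1) * (-(CUR1 2 2) - 98) :=
          mul_nonneg h.le (by linarith)
        nlinarith [sq_nonneg (CUR1 1 2 - CUR1 2 1), sq_nonneg (CUR1 1 2 + CUR1 2 1), hminor, hsum, key,
          sq_nonneg (-1 - CUR1 0 0), sq_nonneg (CUR1 0 1), sq_nonneg (10 - CUR1 0 2),
          sq_nonneg (CUR1 1 0), sq_nonneg (10 - CUR1 2 0), sq_nonneg (CUR1 2 1),
          sq_nonneg (-100 - CUR1 2 2)]
    have hrest : (-1 - CUR1 0 0)^2 + (CUR1 0 1)^2 + (10 - CUR1 0 2)^2 + (CUR1 1 0)^2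
        + (CUR1 1 2)^2 + (10 - CUR1 2 0)^2 + (CUR1 2 1)^2 + (-100 - CUR1 2 2)^2 ≤ 0 := by
      nlinarith [hsum, h11]
    have e00 : CUR1 0 0 = -1 := by
      symm; apply eq_of_sq_le_zero; nlinarith [hrest, sq_nonneg (CUR1 0 1),
        sq_nonneg (10 - CUR1 0 2), sq_nonneg (CUR1 1 0), sq_nonneg (CUR1 1 2),
        sq_nonneg (10 - CUR1 2 0), sq_nonneg (CUR1 2 1), sq_nonneg (-100 - CUR1 2 2)]
    have e01 : CUR1 0 1 = 0 := by
      apply eq_of_sq_le_zero; nlinarith [hrest, sq_nonneg (-1 - CUR1 0 0),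
        sq_nonneg (10 - CUR1 0 2), sq_nonneg (CUR1 1 0), sq_nonneg (CUR1 1 2),
        sq_nonneg (10 - CUR1 2 0), sq_nonneg (CUR1 2 1), sq_nonneg (-100 - CUR1 2 2)]
    have e02 : CUR1 0 2 = 10 := by
      symm; apply eq_of_sq_le_zero; nlinarith [hrest, sq_nonneg (-1 - CUR1 0 0),
        sq_nonneg (CUR1 0 1), sq_nonneg (CUR1 1 0), sq_nonneg (CUR1 1 2),
        sq_nonneg (10 - CUR1 2 0), sq_nonneg (CUR1 2 1), sq_nonneg (-100 - CUR1 2 2)]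
    have e10 : CUR1 1 0 = 0 := by
      apply eq_of_sq_le_zero; nlinarith [hrest, sq_nonneg (-1 - CUR1 0 0),
        sq_nonneg (CUR1 0 1), sq_nonneg (10 - CUR1 0 2), sq_nonneg (CUR1 1 2),
        sq_nonneg (10 - CUR1 2 0), sq_nonneg (CUR1 2 1), sq_nonneg (-100 - CUR1 2 2)]
    have e12 : CUR1 1 2 = 0 := by
      apply eq_of_sq_le_zero; nlinarith [hrest, sq_nonneg (-1 - CUR1 0 0),
        sq_nonneg (CUR1 0 1), sq_nonneg (10 - CUR1 0 2), sq_nonneg (CUR1 1 0),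
        sq_nonneg (10 - CUR1 2 0), sq_nonneg (CUR1 2 1), sq_nonneg (-100 - CUR1 2 2)]
    have e20 : CUR1 2 0 = 10 := by
      symm; apply eq_of_sq_le_zero; nlinarith [hrest, sq_nonneg (-1 - CUR1 0 0),
        sq_nonneg (CUR1 0 1), sq_nonneg (10 - CUR1 0 2), sq_nonneg (CUR1 1 0),
        sq_nonneg (CUR1 1 2), sq_nonneg (CUR1 2 1), sq_nonneg (-100 - CUR1 2 2)]
    have e21 : CUR1 2 1 = 0 := by
      apply eq_of_sq_le_zero; nlinarith [hrest, sq_nonneg (-1 - CUR1 0 0),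
        sq_nonneg (CUR1 0 1), sq_nonneg (10 - CUR1 0 2), sq_nonneg (CUR1 1 0),
        sq_nonneg (CUR1 1 2), sq_nonneg (10 - CUR1 2 0), sq_nonneg (-100 - CUR1 2 2)]
    have e22 : CUR1 2 2 = -100 := by
      symm; apply eq_of_sq_le_zero; nlinarith [hrest, sq_nonneg (-1 - CUR1 0 0),
        sq_nonneg (CUR1 0 1), sq_nonneg (10 - CUR1 0 2), sq_nonneg (CUR1 1 0),
        sq_nonneg (CUR1 1 2), sq_nonneg (10 - CUR1 2 0), sq_nonneg (CUR1 2 1)]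
    ext i j
    fin_cases i <;> fin_cases j <;> simp <;>
      first | exact e00 | exact e01 | exact e02 | exact e10 | exact h11 | exact e12 | exact e20 | exact e21 | exact e22
  -- Step 7: A - CUR1
  have hM2 : !![(-1:ℝ),0,10;0,2,0;10,0,100] - CUR1 = !![(0:ℝ),0,0;0,2,0;0,0,200] := by
    rw [hCUR1']
    ext i j
    fin_cases i <;> fin_cases j <;> simp [Matrix.sub_apply, Matrix.vecHead, Matrix.vecTail] <;> norm_num [Matrix.vecHead, Matrix.vecTail]
  rw [hM1, hM2]
  -- frobNorm facts
  have hfrob1 : frobNorm (!![(-1:ℝ),0,10;0,0,0;10,0,100] : Matrix (Fin 3) (Fin 3) ℝ) = 101 := by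
    unfold frobNorm
    rw [show (∑ i, ∑ j, ‖(!![(-1:ℝ),0,10;0,0,0;10,0,100] : Matrix (Fin 3) (Fin 3) ℝ) i j‖ ^ 2)
        = (101:ℝ)^2 by
      simp only [Fin.sum_univ_three, Real.norm_eq_abs, sq_abs]
      norm_num [Matrix.vecHead, Matrix.vecTail, Matrix.cons_val_two]]
    exact Real.sqrt_sq (by norm_num [Matrix.vecHead, Matrix.vecTail])
  have hfrob2 : frobNorm (!![(0:ℝ),0,0;0,2,0;0,0,200] : Matrix (Fin 3) (Fin 3) ℝ)
      = Real.sqrt 40004 := by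
    unfold frobNorm
    congr 1
    simp only [Fin.sum_univ_three, Real.norm_eq_abs, sq_abs]
    norm_num [Matrix.vecHead, Matrix.vecTail, Matrix.cons_val_two]
  -- spectral norm of M1 : at most 101
  have hspec1 : specNorm (!![(-1:ℝ),0,10;0,0,0;10,0,100] : Matrix (Fin 3) (Fin 3) ℝ) ≤ 101 := by
    set M1 : Matrix (Fin 3) (Fin 3) ℝ := !![(-1:ℝ),0,10;0,0,0;10,0,100] with hM1def
    have hN := Matrix.isHermitian_conjTranspose_mul_self M1
    have htr : (M1ᴴ * M1).trace = 10201 := by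
      have hexp : M1ᴴ * M1 = !![(101:ℝ),0,990;0,0,0;990,0,10100] := by
        ext i j
        fin_cases i <;> fin_cases j <;>
          simp only [M1, Matrix.mul_apply, Matrix.conjTranspose_apply, star_trivial,
            Fin.sum_univ_three] <;>
          norm_num [Matrix.vecHead, Matrix.vecTail, Matrix.cons_val_two]
      rw [hexp]
      rw [Matrix.trace_fin_three]
      norm_num [Matrix.vecHead, Matrix.vecTail, Matrix.cons_val_two]
    have hnn : ∀ i, 0 ≤ hN.eigenvalues i := fun i =>
      (Matrix.posSemidef_conjTranspose_mul_self M1).eigenvalues_nonneg i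
    have hle : ∀ j, hN.eigenvalues j ≤ 10201 := by
      intro j
      have h1 : hN.eigenvalues j ≤ ∑ i, hN.eigenvalues i :=
        Finset.single_le_sum (fun i _ => hnn i) (Finset.mem_univ j)
      rw [sum_eig_eq_trace hN, htr] at h1
      exact h1
    rw [specNorm_aux]
    apply sortedHead_le (by norm_num [Matrix.vecHead, Matrix.vecTail])
    intro x hx
    rw [List.mem_ofFn] at hx
    obtain ⟨j, rfl⟩ := hx
    calc Real.sqrt (hN.eigenvalues j) ≤ Real.sqrt 10201 := Real.sqrt_le_sqrt (hle j)
      _ = 101 := by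
        rw [show (10201:ℝ) = 101^2 by norm_num [Matrix.vecHead, Matrix.vecTail]]
        exact Real.sqrt_sq (by norm_num [Matrix.vecHead, Matrix.vecTail])
  -- spectral norm of M2 : exactly 200
  have hspec2 : specNorm (!![(0:ℝ),0,0;0,2,0;0,0,200] : Matrix (Fin 3) (Fin 3) ℝ) = 200 := by
    set M2 : Matrix (Fin 3) (Fin 3) ℝ := !![(0:ℝ),0,0;0,2,0;0,0,200] with hM2def
    have hN := Matrix.isHermitian_conjTranspose_mul_self M2
    have hdiag : M2ᴴ * M2 = Matrix.diagonal ![(0:ℝ),4,40000] := by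
      ext i j
      fin_cases i <;> fin_cases j <;>
        simp [M2, Matrix.mul_apply, Matrix.conjTranspose_apply, star_trivial,
          Matrix.diagonal, Fin.sum_univ_three] <;> norm_num [Matrix.vecHead, Matrix.vecTail]
    have heig : ∀ j, hN.eigenvalues j = 0 ∨ hN.eigenvalues j = 4 ∨ hN.eigenvalues j = 40000 := by
      intro j
      obtain ⟨i, hi⟩ := eig_of_diag hN hdiag j
      fin_cases i <;> simp at hi <;> tauto
    have hsumtr : ∑ i, hN.eigenvalues i = 40004 := by
      rw [sum_eig_eq_trace hN, hdiag]
      rw [Matrix.trace_diagonal]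
      rw [Fin.sum_univ_three]
      norm_num [Matrix.vecHead, Matrix.vecTail, Matrix.cons_val_two]
    have hex : ∃ j, hN.eigenvalues j = 40000 := by
      by_contra hnone
      push_neg at hnone
      have hb : ∀ j, hN.eigenvalues j ≤ 4 := by
        intro j
        rcases heig j with h | h | h
        · linarith
        · linarith
        · exact absurd h (hnone j)
      rw [Fin.sum_univ_three] at hsumtr
      linarith [hb 0, hb 1, hb 2]
    rw [specNorm_aux]
    apply sortedHead_eq
    · obtain ⟨j, hj⟩ := hex
      rw [List.mem_ofFn]
      refine ⟨j, ?_⟩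
      show Real.sqrt (hN.eigenvalues j) = 200
      rw [hj, show (40000:ℝ) = 200^2 by norm_num [Matrix.vecHead, Matrix.vecTail]]
      exact Real.sqrt_sq (by norm_num [Matrix.vecHead, Matrix.vecTail])
    · intro x hx
      rw [List.mem_ofFn] at hx
      obtain ⟨j, rfl⟩ := hx
      show Real.sqrt (hN.eigenvalues j) ≤ 200
      rcases heig j with h | h | h <;> rw [h]
      · simp
      · rw [show (4:ℝ) = 2^2 by norm_num [Matrix.vecHead, Matrix.vecTail], Real.sqrt_sq (by norm_num [Matrix.vecHead, Matrix.vecTail])]; norm_num [Matrix.vecHead, Matrix.vecTail]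
      · rw [show (40000:ℝ) = 200^2 by norm_num [Matrix.vecHead, Matrix.vecTail], Real.sqrt_sq (by norm_num [Matrix.vecHead, Matrix.vecTail])]
  -- conclusion
  refine ⟨?_, ?_, hfrob1, hfrob2, hspec1, hspec2⟩
  · rw [hspec2]
    have := hspec1
    linarith
  · rw [hfrob1, hfrob2]
    rw [show (101:ℝ) = Real.sqrt (101^2) from (Real.sqrt_sq (by norm_num [Matrix.vecHead, Matrix.vecTail])).symm]
    apply Real.sqrt_lt_sqrt (by positivity)
    norm_num [Matrix.vecHead, Matrix.vecTail]
end
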